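/- arXiv:2302.00365 — 3 statements merged into one kernel-verified Lean document; each statement's English description precedes it below -/
import Mathlib

section
/- Let ν ∈ ℕ and b, c ∈ ℂ with Re(b) > 0. Then ∫_{ℝ²} (1/π) e^{-(x²+y²)} · (conj α)^ν · α · exp(-conj(α)·(b·α - c)) dx dy = (1/(b+1)²)·(c·δ_{ν,0} + δ_{ν,1}), where α = x + iy, conj α = x - iy, and δ denotes the Kronecker delta. In particular the integrand is integrable on ℝ² under the stated hypothesis. -/
open MeasureTheory Complex Filter Topology Metric

noncomputable section

namespace AppA

def al (p : ℝ × ℝ) : ℂ := (p.1 : ℂ) + (p.2 : ℂ) * Complex.I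

lemma conj_al (p : ℝ × ℝ) : (starRingEnd ℂ) (al p) = (p.1 : ℂ) - (p.2 : ℂ) * Complex.I := by
  simp [al, Complex.conj_ofReal, sub_eq_add_neg]

lemma conj_al_mul (p : ℝ × ℝ) :
    (starRingEnd ℂ) (al p) * al p = ((p.1 ^ 2 + p.2 ^ 2 : ℝ) : ℂ) := by
  rw [conj_al, al]
  push_cast
  have h : (Complex.I : ℂ) ^ 2 = -1 := Complex.I_sq
  linear_combination (-(p.2:ℂ)^2) * h

lemma norm_al_le (p : ℝ × ℝ) : ‖al p‖ ≤ |p.1| + |p.2| := by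
  refine (norm_add_le _ _).trans ?_
  simp [Complex.norm_real]

/-- 1D integrability workhorse -/
lemma L1 (n : ℕ) (R k : ℝ) (hk : 0 < k) :
    Integrable (fun x : ℝ => |x| ^ n * Real.exp (R * |x| - k * x ^ 2)) := by
  have hcont : Continuous (fun x : ℝ => |x| ^ n * Real.exp (R * |x| - k * x ^ 2)) := by
    fun_prop
  refine Integrable.mono' ((integrable_exp_neg_mul_sq (show 0 < k/2 by linarith)).const_mul
    ((n.factorial : ℝ) * Real.exp ((1 + |R|) ^ 2 / k))) hcont.aestronglyMeasurable ?_
  filter_upwards with x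
  rw [Real.norm_of_nonneg (by positivity), ← _root_.sq_abs x]
  set t := |x| with htdef
  have ht : 0 ≤ t := abs_nonneg x
  have h1 : t ^ n ≤ (n.factorial : ℝ) * Real.exp t := by
    have h := Real.pow_div_factorial_le_exp t ht n
    rw [div_le_iff₀ (by positivity : (0:ℝ) < n.factorial)] at h
    linarith [h]
  have h2 : Real.exp (R * t - k * t ^ 2) ≤ Real.exp (|R| * t - k * t ^ 2) := by
    apply Real.exp_le_exp.mpr
    have : R * t ≤ |R| * t := mul_le_mul_of_nonneg_right (le_abs_self R) ht
    linarith
  calc t ^ n * Real.exp (R * t - k * t ^ 2)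
      ≤ ((n.factorial : ℝ) * Real.exp t) * Real.exp (|R| * t - k * t ^ 2) := by
        apply mul_le_mul h1 h2 (by positivity) (by positivity)
    _ = (n.factorial : ℝ) * Real.exp ((1 + |R|) * t - k * t ^ 2) := by
        rw [mul_assoc, ← Real.exp_add]; ring_nf
    _ ≤ (n.factorial : ℝ) * Real.exp ((1 + |R|) ^ 2 / k - (k/2) * t ^ 2) := by
        have key : (1 + |R|) * t - k * t ^ 2 ≤ (1 + |R|) ^ 2 / k - (k/2) * t ^ 2 := by
          rw [← mul_le_mul_iff_of_pos_right hk, sub_mul, sub_mul, div_mul_cancel₀ _ (ne_of_gt hk)]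
          nlinarith [sq_nonneg ((1 + |R|) - k * t), hk, sq_nonneg (1 + |R|), ht, abs_nonneg R]
        exact mul_le_mul_of_nonneg_left (Real.exp_le_exp.mpr key) (by positivity)
    _ = (n.factorial : ℝ) * Real.exp ((1 + |R|) ^ 2 / k) * Real.exp (-(k/2) * t ^ 2) := by
        rw [mul_assoc, ← Real.exp_add]; ring_nf


def g (a c : ℂ) (ν : ℕ) (p : ℝ × ℝ) : ℂ :=
  ((starRingEnd ℂ) (al p)) ^ ν * al p *
    Complex.exp (-a * ((p.1 ^ 2 + p.2 ^ 2 : ℝ) : ℂ) + c * (starRingEnd ℂ) (al p))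

def bnd (n : ℕ) (R k : ℝ) (p : ℝ × ℝ) : ℝ :=
  (|p.1| + |p.2|) ^ n * (Real.exp (R * |p.1| - k * p.1 ^ 2) * Real.exp (R * |p.2| - k * p.2 ^ 2))

lemma continuous_g (a c : ℂ) (ν : ℕ) : Continuous (g a c ν) := by
  unfold g
  simp only [conj_al]
  unfold al
  fun_prop

lemma norm_g_le (a : ℂ) (ν : ℕ) {c : ℂ} {R : ℝ} (hc : ‖c‖ ≤ R) (p : ℝ × ℝ) :
    ‖g a c ν p‖ ≤ bnd (ν + 1) R a.re p := by
  have hre : (-a * ((p.1 ^ 2 + p.2 ^ 2 : ℝ) : ℂ) + c * (starRingEnd ℂ) (al p)).re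
      ≤ (R * |p.1| - a.re * p.1 ^ 2) + (R * |p.2| - a.re * p.2 ^ 2) := by
    rw [Complex.add_re]
    have h1 : (-a * ((p.1 ^ 2 + p.2 ^ 2 : ℝ) : ℂ)).re = -a.re * (p.1 ^ 2 + p.2 ^ 2) := by
      simp [Complex.mul_re, ← Complex.ofReal_pow]
      try ring
    have h2 : (c * (starRingEnd ℂ) (al p)).re ≤ R * (|p.1| + |p.2|) := by
      refine (Complex.re_le_norm _).trans ?_
      rw [norm_mul, RCLike.norm_conj]
      exact mul_le_mul hc (norm_al_le p) (norm_nonneg _) ((norm_nonneg c).trans hc)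
    rw [h1]; linarith
  have hnorm : ‖g a c ν p‖ = ‖al p‖ ^ (ν + 1) *
      Real.exp ((-a * ((p.1 ^ 2 + p.2 ^ 2 : ℝ) : ℂ) + c * (starRingEnd ℂ) (al p)).re) := by
    rw [g, norm_mul, norm_mul, norm_pow, RCLike.norm_conj,
      Complex.norm_exp]
    ring
  rw [hnorm, bnd, ← Real.exp_add]
  have h3 : ‖al p‖ ^ (ν + 1) ≤ (|p.1| + |p.2|) ^ (ν + 1) :=
    pow_le_pow_left₀ (norm_nonneg _) (norm_al_le p) _
  exact mul_le_mul h3 (Real.exp_le_exp.mpr hre) (Real.exp_nonneg _) (by positivity)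

lemma integrable_bnd (n : ℕ) (R k : ℝ) (hk : 0 < k) : Integrable (bnd n R k) := by
  have : bnd n R k = fun p : ℝ × ℝ => ∑ j ∈ Finset.range (n + 1),
      (n.choose j : ℝ) * ((|p.1| ^ j * Real.exp (R * |p.1| - k * p.1 ^ 2)) *
        (|p.2| ^ (n - j) * Real.exp (R * |p.2| - k * p.2 ^ 2))) := by
    funext p
    rw [bnd, add_pow, Finset.sum_mul]
    refine Finset.sum_congr rfl fun j hj => by ring
  rw [this]
  refine integrable_finset_sum _ fun j _ => ?_
  have := ((L1 j R k hk).mul_prod (L1 (n - j) R k hk)).const_mul ((n.choose j : ℝ))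
  rw [← Measure.volume_eq_prod ℝ ℝ] at this
  exact this

lemma integrable_g (a : ℂ) (ha : 0 < a.re) (c : ℂ) (ν : ℕ) : Integrable (g a c ν) := by
  refine Integrable.mono' (integrable_bnd (ν + 1) ‖c‖ a.re ha)
    (continuous_g a c ν).aestronglyMeasurable ?_
  filter_upwards with p
  exact norm_g_le a ν le_rfl p


variable {a t : ℂ}

lemma re_quad (a t : ℂ) (x : ℝ) : (-a * (x:ℂ) ^ 2 + t * (x:ℂ)).re = -a.re * x ^ 2 + t.re * x := by
  simp [Complex.mul_re, ← Complex.ofReal_pow]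

lemma integrable_E (ha : 0 < a.re) (t : ℂ) :
    Integrable (fun x : ℝ => Complex.exp (-a * (x:ℂ) ^ 2 + t * (x:ℂ))) := by
  simpa using integrable_cexp_quadratic ha t 0

lemma integrable_xE (ha : 0 < a.re) (t : ℂ) :
    Integrable (fun x : ℝ => (x:ℂ) * Complex.exp (-a * (x:ℂ) ^ 2 + t * (x:ℂ))) := by
  have hc : Continuous (fun x : ℝ => (x:ℂ) * Complex.exp (-a * (x:ℂ) ^ 2 + t * (x:ℂ))) := by
    fun_prop
  refine Integrable.mono' (L1 1 |t.re| a.re ha) hc.aestronglyMeasurable ?_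
  filter_upwards with x
  rw [norm_mul, Complex.norm_exp, re_quad, Complex.norm_real,
    pow_one]
  rw [Real.norm_eq_abs]
  refine mul_le_mul le_rfl (Real.exp_le_exp.mpr ?_) (Real.exp_nonneg _) (abs_nonneg _)
  have : t.re * x ≤ |t.re| * |x| := le_trans (le_abs_self _) (by rw [abs_mul])
  linarith

lemma G0 (ha : 0 < a.re) (t : ℂ) :
    ∫ x : ℝ, Complex.exp (-a * (x:ℂ) ^ 2 + t * (x:ℂ))
      = (↑Real.pi / a) ^ (1/2 : ℂ) * Complex.exp (t ^ 2 / (4 * a)) := by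
  have h := integral_cexp_quadratic (b := -a) (by simpa using ha) t 0
  simpa [div_neg, neg_neg] using h

lemma hasDerivAt_E (x : ℝ) :
    HasDerivAt (fun y : ℝ => Complex.exp (-a * (y:ℂ) ^ 2 + t * (y:ℂ)))
      ((-2 * a * (x:ℂ) + t) * Complex.exp (-a * (x:ℂ) ^ 2 + t * (x:ℂ))) x := by
  have h1 : HasDerivAt (fun z : ℂ => -a * z ^ 2 + t * z) (-2 * a * (x:ℂ) + t) (x:ℂ) := by
    have := ((hasDerivAt_pow 2 (x:ℂ)).const_mul (-a)).add ((hasDerivAt_id (x:ℂ)).const_mul t)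
    refine this.congr_deriv ?_
    rw [show (2:ℕ) - 1 = 1 from rfl]; push_cast; ring
  have h2 := h1.cexp.comp_ofReal
  convert h2 using 1
  ring

lemma integrable_dE (ha : 0 < a.re) (t : ℂ) :
    Integrable (fun x : ℝ =>
      (-2 * a * (x:ℂ) + t) * Complex.exp (-a * (x:ℂ) ^ 2 + t * (x:ℂ))) := by
  have h := ((integrable_xE ha t).const_mul (-2 * a)).add ((integrable_E ha t).const_mul t)
  refine h.congr ?_
  filter_upwards with x
  simp only [Pi.add_apply]
  ring

lemma exp_quad_tendsto (k : ℝ) (hk : 0 < k) (s : ℝ) :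
    Tendsto (fun T : ℝ => Real.exp (s * T - k * T ^ 2)) atTop (𝓝 0) := by
  refine Real.tendsto_exp_atBot.comp ?_
  have : (fun T : ℝ => s * T - k * T ^ 2) = fun T : ℝ => T * (s - k * T) := by
    funext T; ring
  rw [this]
  have hk' : Tendsto (fun T : ℝ => k * T) atTop atTop :=
    Tendsto.const_mul_atTop hk tendsto_id
  have h2 : Tendsto (fun T : ℝ => s - k * T) atTop atBot := by
    have h3 := tendsto_atBot_add_const_left atTop s (tendsto_neg_atTop_atBot.comp hk')
    simpa [Function.comp, sub_eq_add_neg] using h3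
  exact tendsto_id.atTop_mul_atBot₀ h2

lemma E_tendsto_zero (ha : 0 < a.re) (t : ℂ) :
    Tendsto (fun T : ℝ => Complex.exp (-a * (T:ℂ) ^ 2 + t * (T:ℂ))) atTop (𝓝 0) := by
  refine squeeze_zero_norm (fun T => ?_) (exp_quad_tendsto a.re ha t.re)
  rw [Complex.norm_exp, re_quad]
  apply le_of_eq; ring_nf

lemma integral_dE_zero (ha : 0 < a.re) (t : ℂ) :
    ∫ x : ℝ, (-2 * a * (x:ℂ) + t) * Complex.exp (-a * (x:ℂ) ^ 2 + t * (x:ℂ)) = 0 := by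
  set f : ℝ → ℂ := fun x => Complex.exp (-a * (x:ℂ) ^ 2 + t * (x:ℂ)) with hf
  set f' : ℝ → ℂ := fun x => (-2 * a * (x:ℂ) + t) * Complex.exp (-a * (x:ℂ) ^ 2 + t * (x:ℂ))
  have key : Tendsto (fun T : ℝ => ∫ x in (-T)..T, f' x) atTop (𝓝 (∫ x : ℝ, f' x)) :=
    intervalIntegral_tendsto_integral (integrable_dE ha t) tendsto_neg_atTop_atBot tendsto_id
  have eq1 : ∀ T : ℝ, ∫ x in (-T)..T, f' x = f T - f (-T) := fun T =>
    intervalIntegral.integral_eq_sub_of_hasDerivAt (fun x _ => hasDerivAt_E x)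
      ((integrable_dE ha t).intervalIntegrable)
  have lim2 : Tendsto (fun T : ℝ => f T - f (-T)) atTop (𝓝 0) := by
    have h1 : Tendsto (fun T : ℝ => f T) atTop (𝓝 0) := E_tendsto_zero ha t
    have h2 : Tendsto (fun T : ℝ => f (-T)) atTop (𝓝 0) := by
      refine squeeze_zero_norm (fun T => ?_) (exp_quad_tendsto a.re ha (-t.re))
      rw [hf]
      rw [Complex.norm_exp, re_quad]
      apply le_of_eq; ring_nf
    simpa using h1.sub h2
  have : (fun T : ℝ => ∫ x in (-T)..T, f' x) = fun T => f T - f (-T) := funext eq1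
  rw [this] at key
  exact tendsto_nhds_unique key lim2

lemma G1 (ha : 0 < a.re) (t : ℂ) :
    ∫ x : ℝ, (x:ℂ) * Complex.exp (-a * (x:ℂ) ^ 2 + t * (x:ℂ))
      = t / (2 * a) * ((↑Real.pi / a) ^ (1/2 : ℂ) * Complex.exp (t ^ 2 / (4 * a))) := by
  have ha0 : a ≠ 0 := fun h => by simp [h] at ha
  have h0 := integral_dE_zero ha t
  have hsplit : (fun x : ℝ => (-2 * a * (x:ℂ) + t) * Complex.exp (-a * (x:ℂ) ^ 2 + t * (x:ℂ)))
      = fun x : ℝ => (-2 * a) * ((x:ℂ) * Complex.exp (-a * (x:ℂ) ^ 2 + t * (x:ℂ)))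
        + t * Complex.exp (-a * (x:ℂ) ^ 2 + t * (x:ℂ)) := by
    funext x; ring
  rw [hsplit] at h0
  rw [integral_add ((integrable_xE ha t).const_mul _) ((integrable_E ha t).const_mul _),
    integral_const_mul, integral_const_mul, G0 ha t] at h0
  have h1 : ∫ x : ℝ, (x:ℂ) * Complex.exp (-a * (x:ℂ) ^ 2 + t * (x:ℂ))
      = t * ((↑Real.pi / a) ^ (1/2 : ℂ) * Complex.exp (t ^ 2 / (4 * a))) / (2 * a) := by
    field_simp at h0 ⊢
    linear_combination -h0
  rw [h1]; ring


lemma J0 (ha : 0 < a.re) (c : ℂ) :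
    ∫ p : ℝ × ℝ, g a c 0 p = ↑Real.pi * c / a ^ 2 := by
  have ha0 : a ≠ 0 := fun h => by simp [h] at ha
  have hsplit : g a c 0 = fun p : ℝ × ℝ =>
      ((p.1:ℂ) * Complex.exp (-a * (p.1:ℂ) ^ 2 + c * (p.1:ℂ)))
        * Complex.exp (-a * (p.2:ℂ) ^ 2 + (-Complex.I * c) * (p.2:ℂ))
      + Complex.exp (-a * (p.1:ℂ) ^ 2 + c * (p.1:ℂ))
        * (Complex.I * ((p.2:ℂ) * Complex.exp (-a * (p.2:ℂ) ^ 2 + (-Complex.I * c) * (p.2:ℂ)))) := by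
    funext p
    have hexp : -a * ((p.1 ^ 2 + p.2 ^ 2 : ℝ) : ℂ) + c * ((p.1:ℂ) - (p.2:ℂ) * Complex.I)
        = (-a * (p.1:ℂ) ^ 2 + c * (p.1:ℂ)) + (-a * (p.2:ℂ) ^ 2 + (-Complex.I * c) * (p.2:ℂ)) := by
      push_cast; ring
    rw [g, conj_al, hexp, Complex.exp_add, pow_zero, one_mul, al]
    ring
  rw [hsplit]
  have hint1 : Integrable (fun p : ℝ × ℝ =>
      ((p.1:ℂ) * Complex.exp (-a * (p.1:ℂ) ^ 2 + c * (p.1:ℂ)))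
        * Complex.exp (-a * (p.2:ℂ) ^ 2 + (-Complex.I * c) * (p.2:ℂ))) := by
    have := (integrable_xE ha c).mul_prod (integrable_E ha (-Complex.I * c))
    rwa [← Measure.volume_eq_prod] at this
  have hint2 : Integrable (fun p : ℝ × ℝ =>
      Complex.exp (-a * (p.1:ℂ) ^ 2 + c * (p.1:ℂ))
        * (Complex.I * ((p.2:ℂ) * Complex.exp (-a * (p.2:ℂ) ^ 2 + (-Complex.I * c) * (p.2:ℂ))))) := by
    have := (integrable_E ha c).mul_prod ((integrable_xE ha (-Complex.I * c)).const_mul Complex.I)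
    rwa [← Measure.volume_eq_prod] at this
  rw [integral_add hint1 hint2, Measure.volume_eq_prod,
    integral_prod_mul (f := fun x : ℝ => (x:ℂ) * Complex.exp (-a * (x:ℂ) ^ 2 + c * (x:ℂ)))
      (g := fun y : ℝ => Complex.exp (-a * (y:ℂ) ^ 2 + (-Complex.I * c) * (y:ℂ))),
    integral_prod_mul (f := fun x : ℝ => Complex.exp (-a * (x:ℂ) ^ 2 + c * (x:ℂ)))
      (g := fun y : ℝ => Complex.I * ((y:ℂ) * Complex.exp (-a * (y:ℂ) ^ 2 + (-Complex.I * c) * (y:ℂ)))),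
    integral_const_mul, G0 ha, G0 ha, G1 ha, G1 ha]
  set P := (↑Real.pi / a) ^ (1/2 : ℂ) with hP
  set X := Complex.exp (c ^ 2 / (4 * a)) with hX
  set Y := Complex.exp ((-Complex.I * c) ^ 2 / (4 * a)) with hY
  have hPP : P * P = ↑Real.pi / a := by
    rw [hP, ← Complex.cpow_add _ _ (div_ne_zero (Complex.ofReal_ne_zero.mpr Real.pi_ne_zero) ha0)]
    norm_num
  have hXY : X * Y = 1 := by
    rw [hX, hY, ← Complex.exp_add]
    rw [show c ^ 2 / (4 * a) + (-Complex.I * c) ^ 2 / (4 * a) = 0 from by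
      field_simp
      linear_combination (c ^ 2) * Complex.I_sq]
    exact Complex.exp_zero
  have hI : Complex.I * -Complex.I = 1 := by simp [Complex.I_mul_I]
  calc c / (2 * a) * (P * X) * (P * Y)
        + P * X * (Complex.I * (-Complex.I * c / (2 * a) * (P * Y)))
      = (P * P) * (X * Y) * (c / (2 * a))
        + (P * P) * (X * Y) * ((Complex.I * -Complex.I) * (c / (2 * a))) := by ring
    _ = ↑Real.pi * c / a ^ 2 := by
        rw [hPP, hXY, hI]
        field_simp
        ring


lemma hasDerivAt_int_g (ha : 0 < a.re) (ν : ℕ) (c : ℂ) :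
    HasDerivAt (fun c' => ∫ p : ℝ × ℝ, g a c' ν p) (∫ p : ℝ × ℝ, g a c (ν + 1) p) c := by
  have h := hasDerivAt_integral_of_dominated_loc_of_deriv_le (μ := (volume : Measure (ℝ × ℝ)))
    (F := fun c' p => g a c' ν p) (F' := fun c' p => g a c' (ν + 1) p) (x₀ := c)
    (bound := bnd (ν + 2) (‖c‖ + 1) a.re) (ball_mem_nhds c one_pos)
    (Eventually.of_forall fun c' => (continuous_g a c' ν).aestronglyMeasurable)
    (integrable_g a ha c ν)
    ((continuous_g a c (ν + 1)).aestronglyMeasurable)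
    ?_ (integrable_bnd (ν + 2) (‖c‖ + 1) a.re ha) ?_
  · exact h.2
  · filter_upwards with p
    intro c' hc'
    have hle : ‖c'‖ ≤ ‖c‖ + 1 := by
      have h1 : ‖c' - c‖ < 1 := mem_ball_iff_norm.mp hc'
      calc ‖c'‖ = ‖c + (c' - c)‖ := by ring_nf
        _ ≤ ‖c‖ + ‖c' - c‖ := norm_add_le _ _
        _ ≤ ‖c‖ + 1 := by linarith
    exact norm_g_le a (ν + 1) hle p
  · filter_upwards with p
    intro c' _
    have h1 : HasDerivAt (fun c'' : ℂ => -a * ((p.1 ^ 2 + p.2 ^ 2 : ℝ) : ℂ)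
        + c'' * (starRingEnd ℂ) (al p)) ((starRingEnd ℂ) (al p)) c' :=
      (hasDerivAt_mul_const _).const_add _
    have h2 := (h1.cexp).const_mul (((starRingEnd ℂ) (al p)) ^ ν * al p)
    refine h2.congr_deriv ?_
    simp only [g, pow_succ]
    ring

lemma Jall (ha : 0 < a.re) (ν : ℕ) (c : ℂ) :
    ∫ p : ℝ × ℝ, g a c ν p = ↑Real.pi / a ^ 2 *
      (c * (if ν = 0 then 1 else 0) + (if ν = 1 then 1 else 0)) := by
  induction ν generalizing c with
  | zero =>
    rw [J0 ha c]; simp; ring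
  | succ n ih =>
    have hD := hasDerivAt_int_g ha n c
    have heq : (fun c' => ∫ p : ℝ × ℝ, g a c' n p)
        = fun c' : ℂ => ↑Real.pi / a ^ 2 *
          (c' * (if n = 0 then 1 else 0) + (if n = 1 then 1 else 0)) := funext fun c' => ih c'
    rw [heq] at hD
    have hD2 : HasDerivAt (fun c' : ℂ => ↑Real.pi / a ^ 2 *
        (c' * (if n = 0 then 1 else 0) + (if n = 1 then 1 else 0)))
        (↑Real.pi / a ^ 2 * (if n = 0 then 1 else 0)) c := by
      have h3 := (((hasDerivAt_id c).mul_const ((if n = 0 then (1:ℂ) else 0))).add_const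
        ((if n = 1 then (1:ℂ) else 0))).const_mul (↑Real.pi / a ^ 2)
      simpa using h3
    rw [hD.unique hD2]
    rcases n with _ | m
    · simp
    · simp


end AppA

open AppA in
/-- The Lemma of Appendix A: for `ν ∈ ℕ`, `b c ∈ ℂ` with `Re b > 0`,
`∫ dμ(α) (conj α)^ν α e^{-conj α (bα - c)} = (c δ_{ν,0} + δ_{ν,1})/(b+1)²`,
where `dμ(α) = (1/π) e^{-(x²+y²)} dx dy` and `α = x + iy`; moreover the integrand is
integrable on `ℝ²`. -/
theorem stmt0 (ν : ℕ) (b c : ℂ) (hb : 0 < b.re) :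
    Integrable (fun p : ℝ × ℝ =>
        (1 / (Real.pi : ℂ)) * Complex.exp (-((p.1 : ℂ)^2 + (p.2 : ℂ)^2)) *
          (starRingEnd ℂ ((p.1 : ℂ) + (p.2 : ℂ) * Complex.I))^ν *
          ((p.1 : ℂ) + (p.2 : ℂ) * Complex.I) *
          Complex.exp (-(starRingEnd ℂ ((p.1 : ℂ) + (p.2 : ℂ) * Complex.I)) *
            (b * ((p.1 : ℂ) + (p.2 : ℂ) * Complex.I) - c)))
      ∧ (∫ p : ℝ × ℝ,
          (1 / (Real.pi : ℂ)) * Complex.exp (-((p.1 : ℂ)^2 + (p.2 : ℂ)^2)) *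
            (starRingEnd ℂ ((p.1 : ℂ) + (p.2 : ℂ) * Complex.I))^ν *
            ((p.1 : ℂ) + (p.2 : ℂ) * Complex.I) *
            Complex.exp (-(starRingEnd ℂ ((p.1 : ℂ) + (p.2 : ℂ) * Complex.I)) *
              (b * ((p.1 : ℂ) + (p.2 : ℂ) * Complex.I) - c)))
        = (1 / (b + 1)^2) *
            (c * (if ν = 0 then 1 else 0) + (if ν = 1 then 1 else 0)) := by
  have ha : 0 < (b + 1).re := by
    simp only [Complex.add_re, Complex.one_re]
    linarith
  have hπ : (Real.pi : ℂ) ≠ 0 := Complex.ofReal_ne_zero.mpr Real.pi_ne_zero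
  have ha0 : (b + 1) ≠ 0 := fun h => by simp [h] at ha
  have hfun : (fun p : ℝ × ℝ =>
        (1 / (Real.pi : ℂ)) * Complex.exp (-((p.1 : ℂ)^2 + (p.2 : ℂ)^2)) *
          (starRingEnd ℂ ((p.1 : ℂ) + (p.2 : ℂ) * Complex.I))^ν *
          ((p.1 : ℂ) + (p.2 : ℂ) * Complex.I) *
          Complex.exp (-(starRingEnd ℂ ((p.1 : ℂ) + (p.2 : ℂ) * Complex.I)) *
            (b * ((p.1 : ℂ) + (p.2 : ℂ) * Complex.I) - c)))
      = fun p : ℝ × ℝ => (1 / (Real.pi : ℂ)) * g (b + 1) c ν p := by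
    funext p
    rw [g]
    show (1 / (Real.pi : ℂ)) * Complex.exp (-((p.1 : ℂ)^2 + (p.2 : ℂ)^2)) *
          ((starRingEnd ℂ) (al p))^ν * al p *
          Complex.exp (-((starRingEnd ℂ) (al p)) * (b * al p - c)) = _
    have hkey : -((p.1 : ℂ)^2 + (p.2 : ℂ)^2) + (-((starRingEnd ℂ) (al p)) * (b * al p - c))
        = -(b + 1) * ((p.1 ^ 2 + p.2 ^ 2 : ℝ) : ℂ) + c * (starRingEnd ℂ) (al p) := by
      have h := conj_al_mul p
      push_cast at h ⊢
      linear_combination (-b) * h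
    calc (1 / (Real.pi : ℂ)) * Complex.exp (-((p.1 : ℂ)^2 + (p.2 : ℂ)^2)) *
          ((starRingEnd ℂ) (al p))^ν * al p *
          Complex.exp (-((starRingEnd ℂ) (al p)) * (b * al p - c))
        = (1 / (Real.pi : ℂ)) * (((starRingEnd ℂ) (al p))^ν * al p *
            (Complex.exp (-((p.1 : ℂ)^2 + (p.2 : ℂ)^2)) *
             Complex.exp (-((starRingEnd ℂ) (al p)) * (b * al p - c)))) := by ring
      _ = _ := by rw [← Complex.exp_add, hkey]
  constructor
  · rw [hfun]
    exact (integrable_g (b + 1) ha c ν).const_mul _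
  · rw [hfun, integral_const_mul, Jall ha ν c]
    field_simp
end
end

section
/- Fix α ∈ ℂ. Let 𝐏_α denote the orthogonal projection of ℓ²(ℕ, ℂ) onto the finite-dimensional (hence complete) subspace spanned by c_α and c_{-α}, let P be the parity operator (P f)(n) = (-1)ⁿ f(n), and let σ_x be the bounded operator v ↦ ⟪c_{-α}, v⟫·c_α + ⟪c_α, v⟫·c_{-α}. Then for every v ∈ ℓ²(ℕ, ℂ): 𝐏_α(P(𝐏_α v)) - σ_x v = -e^{-2|α|²} · 𝐏_α v. (This operator identity is what yields the paper's trace-norm formula ‖𝐏_α P 𝐏_α - σ_x‖₁ = 2 e^{-2|α|²} for α ≠ 0, since 𝐏_α is then a rank-2 orthogonal projection.) -/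
/-- The coefficient sequence of the coherent state `|α⟩`:
`c_α(n) = e^{-|α|²/2} αⁿ/√(n!)`. -/
noncomputable def catCoeff (α : ℂ) (n : ℕ) : ℂ :=
  Complex.exp (-((‖α‖ : ℂ))^2 / 2) * α^n / ((Real.sqrt (Nat.factorial n) : ℝ) : ℂ)

/-- The coherent state `|α⟩` as an element of `ℓ²(ℕ, ℂ)`, given a proof of membership. -/
noncomputable def coherent (α : ℂ) (h : Memℓp (catCoeff α) 2) : lp (fun _ : ℕ => ℂ) 2 :=
  ⟨catCoeff α, h⟩

lemma exp_tsum_div (z : ℂ) : Complex.exp z = ∑' n : ℕ, z ^ n / (Nat.factorial n : ℂ) := by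
  rw [Complex.exp_eq_exp_ℂ, NormedSpace.exp_eq_tsum_div]

lemma coherent_inner (β γ : ℂ) (hβ : Memℓp (catCoeff β) 2) (hγ : Memℓp (catCoeff γ) 2) :
    inner (𝕜 := ℂ) (coherent β hβ) (coherent γ hγ)
      = Complex.exp (-((‖β‖ : ℂ))^2/2 - ((‖γ‖ : ℂ))^2/2
          + (starRingEnd ℂ) β * γ) := by
  rw [lp.inner_eq_tsum]
  have hterm : ∀ n : ℕ, (inner (𝕜 := ℂ) ((coherent β hβ : ∀ _ : ℕ, ℂ) n)
      ((coherent γ hγ : ∀ _ : ℕ, ℂ) n))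
      = (Complex.exp (-((‖β‖ : ℂ))^2/2) * Complex.exp (-((‖γ‖ : ℂ))^2/2))
        * (((starRingEnd ℂ) β * γ)^n / (Nat.factorial n : ℂ)) := by
    intro n
    have hs : ((Real.sqrt (Nat.factorial n) : ℝ) : ℂ) * ((Real.sqrt (Nat.factorial n) : ℝ) : ℂ)
        = ((Nat.factorial n : ℕ) : ℂ) := by
      rw [← Complex.ofReal_mul, Real.mul_self_sqrt (by positivity)]
      push_cast; ring
    show catCoeff γ n * (starRingEnd ℂ) (catCoeff β n) = _
    unfold catCoeff
    rw [map_div₀, map_mul, map_pow, Complex.conj_ofReal]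
    have hce : (starRingEnd ℂ) (Complex.exp (-((‖β‖ : ℂ))^2 / 2))
        = Complex.exp (-((‖β‖ : ℂ))^2 / 2) := by
      rw [← Complex.exp_conj]
      congr 1
      simp [map_div₀, map_pow, map_neg, Complex.conj_ofReal, map_ofNat]
    rw [hce, div_mul_div_comm, hs, mul_pow]
    ring
  rw [tsum_congr hterm, tsum_mul_left, ← exp_tsum_div, ← Complex.exp_add, ← Complex.exp_add]
  congr 1
  ring

lemma catCoeff_neg (α : ℂ) (n : ℕ) : catCoeff (-α) n = (-1)^n * catCoeff α n := by
  unfold catCoeff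
  rw [norm_neg, neg_pow]
  ring

/-- With `𝐏_α` the orthogonal projection onto `span{|α⟩, |-α⟩}` (characterized by having
values in the span and residuals orthogonal to it), `P` the parity operator, and
`σₓ = |α⟩⟨-α| + |-α⟩⟨α|`, one has the operator identity
`𝐏_α P 𝐏_α - σₓ = -e^{-2|α|²} 𝐏_α` (which yields `‖𝐏_α P 𝐏_α - σₓ‖₁ = 2e^{-2|α|²}`). -/
theorem stmt6 (α : ℂ) (hα : Memℓp (catCoeff α) 2) (hmα : Memℓp (catCoeff (-α)) 2)
    (P : lp (fun _ : ℕ => ℂ) 2 →L[ℂ] lp (fun _ : ℕ => ℂ) 2)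
    (hP : ∀ (f : lp (fun _ : ℕ => ℂ) 2) (n : ℕ), (P f : ∀ _ : ℕ, ℂ) n = (-1)^n * f n)
    (Pproj : lp (fun _ : ℕ => ℂ) 2 → lp (fun _ : ℕ => ℂ) 2)
    (hPmem : ∀ w, Pproj w ∈
      Submodule.span ℂ ({coherent α hα, coherent (-α) hmα} : Set (lp (fun _ : ℕ => ℂ) 2)))
    (hPorth : ∀ w, ∀ x ∈
      Submodule.span ℂ ({coherent α hα, coherent (-α) hmα} : Set (lp (fun _ : ℕ => ℂ) 2)),
      inner (𝕜 := ℂ) x (w - Pproj w) = 0) :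
    ∀ v : lp (fun _ : ℕ => ℂ) 2,
      Pproj (P (Pproj v))
          - ((inner (𝕜 := ℂ) (coherent (-α) hmα) v) • coherent α hα
              + (inner (𝕜 := ℂ) (coherent α hα) v) • coherent (-α) hmα)
        = (-((Real.exp (-2 * (‖α‖)^2) : ℝ) : ℂ)) • Pproj v := by
  intro v
  set a := coherent α hα with ha_def
  set b := coherent (-α) hmα with hb_def
  set S := Submodule.span ℂ ({a, b} : Set (lp (fun _ : ℕ => ℂ) 2)) with hS_def
  have haS : a ∈ S := Submodule.subset_span (by simp)
  have hbS : b ∈ S := Submodule.subset_span (by simp)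
  -- Pproj fixes the span
  have hfix : ∀ x ∈ S, Pproj x = x := by
    intro x hx
    have hd : x - Pproj x ∈ S := Submodule.sub_mem S hx (hPmem x)
    have h0 : inner (𝕜 := ℂ) (x - Pproj x) (x - Pproj x) = (0 : ℂ) := hPorth x _ hd
    have := inner_self_eq_zero.mp h0
    exact (sub_eq_zero.mp this).symm
  -- parity swaps a and b
  have hPab : P a = b := by
    apply lp.ext; funext n
    rw [hP a n]
    show (-1)^n * catCoeff α n = catCoeff (-α) n
    rw [catCoeff_neg]
  have hPba : P b = a := by
    apply lp.ext; funext n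
    rw [hP b n]
    show (-1)^n * catCoeff (-α) n = catCoeff α n
    rw [catCoeff_neg, ← mul_assoc, ← mul_pow]
    norm_num
  -- inner product values
  set E : ℂ := Complex.exp (-2 * ((‖α‖ : ℂ))^2) with hE_def
  have hconj : (starRingEnd ℂ) α * α = ((‖α‖ : ℂ))^2 := by
    rw [mul_comm, Complex.mul_conj, ← Complex.sq_norm]
    push_cast; ring
  have haa : inner (𝕜 := ℂ) a a = 1 := by
    rw [ha_def, coherent_inner, hconj]
    rw [show -((‖α‖ : ℂ))^2/2 - ((‖α‖ : ℂ))^2/2 + ((‖α‖ : ℂ))^2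
      = 0 by ring, Complex.exp_zero]
  have habs : ‖-α‖ = ‖α‖ := norm_neg _
  have hab : inner (𝕜 := ℂ) a b = E := by
    rw [ha_def, hb_def, coherent_inner, habs, hE_def]
    congr 1
    rw [mul_neg, hconj]
    ring
  have hba : inner (𝕜 := ℂ) b a = E := by
    rw [ha_def, hb_def, coherent_inner, habs, hE_def]
    congr 1
    rw [show (starRingEnd ℂ) (-α) * α = -((starRingEnd ℂ) α * α) by rw [map_neg]; ring, hconj]
    ring
  have hbb : inner (𝕜 := ℂ) b b = 1 := by
    rw [hb_def, coherent_inner, habs]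
    rw [show (starRingEnd ℂ) (-α) * (-α) = (starRingEnd ℂ) α * α by rw [map_neg]; ring, hconj]
    rw [show -((‖α‖ : ℂ))^2/2 - ((‖α‖ : ℂ))^2/2 + ((‖α‖ : ℂ))^2
      = 0 by ring, Complex.exp_zero]
  -- key linear identity on the span
  have hkey : ∀ p ∈ S, P p + E • p
      = (inner (𝕜 := ℂ) b p) • a + (inner (𝕜 := ℂ) a p) • b := by
    intro p hp
    induction hp using Submodule.span_induction with
    | mem x hx =>
      rcases hx with hx | hx
      · subst hx
        rw [hPab, hba, haa, one_smul]
        abel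
      · simp only [Set.mem_singleton_iff] at hx
        subst hx
        rw [hPba, hbb, hab, one_smul]
    | zero => simp
    | add x y hx hy ihx ihy =>
      rw [map_add, inner_add_right, inner_add_right, smul_add, add_smul, add_smul]
      calc P x + P y + (E • x + E • y) = (P x + E • x) + (P y + E • y) := by abel
        _ = _ := by rw [ihx, ihy]; abel
    | smul c x hx ih =>
      rw [map_smul, inner_smul_right, inner_smul_right, mul_smul, mul_smul, ← smul_add,
        ← ih, smul_add, smul_comm c E]
  -- inner products of v match those of Pproj v
  have hva : inner (𝕜 := ℂ) a v = inner (𝕜 := ℂ) a (Pproj v) := by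
    have h0 := hPorth v a haS
    rwa [inner_sub_right, sub_eq_zero] at h0
  have hvb : inner (𝕜 := ℂ) b v = inner (𝕜 := ℂ) b (Pproj v) := by
    have h0 := hPorth v b hbS
    rwa [inner_sub_right, sub_eq_zero] at h0
  have hp : Pproj v ∈ S := hPmem v
  have hPpv : P (Pproj v)
      = (inner (𝕜 := ℂ) b (Pproj v)) • a + (inner (𝕜 := ℂ) a (Pproj v)) • b
        - E • (Pproj v) :=
    eq_sub_of_add_eq (hkey (Pproj v) hp)
  have hmemP : P (Pproj v) ∈ S := by
    rw [hPpv]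
    exact Submodule.sub_mem _ (Submodule.add_mem _ (S.smul_mem _ haS) (S.smul_mem _ hbS))
      (S.smul_mem _ hp)
  have hE' : ((Real.exp (-2 * (‖α‖)^2) : ℝ) : ℂ) = E := by
    rw [Complex.ofReal_exp, hE_def]
    push_cast
    ring_nf
  rw [hfix _ hmemP, hva, hvb, hPpv, hE', neg_smul]
  abel
end

section
/- Let ω₀, ε, w, p, κ, α₀ ∈ ℝ with ω₀ ≠ 0, set Ω = ω₀ - ε·w, and define α : ℝ → ℂ by α(t) = α₀·e^{-iΩt} + (ε/ω₀)·[ i·κ·(1 - cos(Ωt)) - (κ + i·α₀·p)·sin(Ωt) ]. Then there exists a constant C ≥ 0, independent of t (one may take C = (|w|(|κ| + |p||α₀|) + |p|(3|κ| + |p||α₀|))/|ω₀|), such that for all t ∈ ℝ: |α'(t) + i·((ω₀ - εw)·α(t) + εp·conj(α(t))) + εκ| ≤ C·ε². In other words, α(t) solves the small-amplitude linear system dα/dt = -i((ω₀-εw)α + εp·conj(α)) - εκ up to a residual that is uniformly O(ε²). -/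
/-- The solution claimed in Appendix A for the small-amplitude dynamics:
`α(t) = α₀ e^{-iΩt} + (ε/ω₀)[iκ(1-cos Ωt) - (κ + iα₀p) sin Ωt]` with `Ω = ω₀ - εw`
solves `dα/dt = -i((ω₀-εw)α + εp·conj α) - εκ` up to a residual uniformly `O(ε²)`. -/
theorem stmt14 (ω₀ ε w p κ α₀ : ℝ) (hω : ω₀ ≠ 0) (Ω : ℝ) (hΩ : Ω = ω₀ - ε * w)
    (f : ℝ → ℂ)
    (hf : f = fun t : ℝ =>
      (α₀ : ℂ) * Complex.exp (-Complex.I * (Ω : ℂ) * (t : ℂ))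
        + ((ε : ℂ) / (ω₀ : ℂ)) *
          (Complex.I * (κ : ℂ) * (1 - (Real.cos (Ω * t) : ℂ))
            - ((κ : ℂ) + Complex.I * (α₀ : ℂ) * (p : ℂ)) * (Real.sin (Ω * t) : ℂ))) :
    ∃ C : ℝ, 0 ≤ C ∧ ∀ t : ℝ,
      ‖(deriv f t
          + Complex.I * (((ω₀ : ℂ) - (ε : ℂ) * (w : ℂ)) * f t
              + (ε : ℂ) * (p : ℂ) * (starRingEnd ℂ (f t)))
          + (ε : ℂ) * (κ : ℂ))‖ ≤ C * ε^2 := by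
  have hω' : (ω₀ : ℂ) ≠ 0 := Complex.ofReal_ne_zero.mpr hω
  set K : ℝ := |κ*w| + 2*|α₀*p*w| + 3*|p*κ| + |α₀*p^2| with hKdef
  refine ⟨K / |ω₀|, by positivity, fun t => ?_⟩
  set s : ℝ := Real.sin (Ω * t) with hs
  set c : ℝ := Real.cos (Ω * t) with hc
  -- derivatives of the building blocks
  have h1 : HasDerivAt (fun t : ℝ => Ω * t) Ω t := by
    simpa using (hasDerivAt_id t).const_mul Ω
  have hde : HasDerivAt (fun t : ℝ => Complex.exp (-Complex.I * (Ω : ℂ) * (t : ℂ)))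
      ((-Complex.I * Ω) * Complex.exp (-Complex.I * (Ω : ℂ) * (t : ℂ))) t := by
    have h1' : HasDerivAt (fun t : ℝ => ((t : ℝ) : ℂ)) 1 t := Complex.ofRealCLM.hasDerivAt
    simpa [mul_comm] using (h1'.const_mul (-Complex.I * (Ω:ℂ))).cexp
  have hdc : HasDerivAt (fun t : ℝ => ((Real.cos (Ω * t) : ℝ) : ℂ))
      ((-(Ω * s) : ℝ) : ℂ) t := by
    simpa [hs, mul_comm] using ((Real.hasDerivAt_cos (Ω*t)).comp t h1).ofReal_comp
  have hds : HasDerivAt (fun t : ℝ => ((Real.sin (Ω * t) : ℝ) : ℂ))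
      (((Ω * c) : ℝ) : ℂ) t := by
    simpa [hc, mul_comm] using ((Real.hasDerivAt_sin (Ω*t)).comp t h1).ofReal_comp
  -- derivative of f
  have hdf : HasDerivAt f
      ((α₀ : ℂ) * ((-Complex.I * Ω) * Complex.exp (-Complex.I * (Ω : ℂ) * (t : ℂ)))
        + ((ε : ℂ) / (ω₀ : ℂ)) *
          (Complex.I * (κ : ℂ) * (0 - ((-(Ω * s) : ℝ) : ℂ))
            - ((κ : ℂ) + Complex.I * (α₀ : ℂ) * (p : ℂ)) * (((Ω * c) : ℝ) : ℂ))) t := by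
    rw [hf]
    exact ((hde.const_mul (α₀ : ℂ)).add
      ((((hasDerivAt_const t (1:ℂ)).sub hdc).const_mul (Complex.I * (κ : ℂ))).sub
        (hds.const_mul ((κ : ℂ) + Complex.I * (α₀ : ℂ) * (p : ℂ))) |>.const_mul
          ((ε : ℂ) / (ω₀ : ℂ))))
  -- the exponential in terms of cos and sin
  have hE : Complex.exp (-Complex.I * (Ω : ℂ) * (t : ℂ)) = (c:ℂ) - (s:ℂ)*Complex.I := by
    rw [show -Complex.I * (Ω:ℂ) * (t:ℂ) = ((-(Ω*t) : ℝ) : ℂ) * Complex.I by push_cast; ring,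
      Complex.exp_mul_I, ← Complex.ofReal_cos, ← Complex.ofReal_sin]
    rw [Real.cos_neg, Real.sin_neg, hs, hc]
    push_cast
    ring
  -- the residual is an explicit `ε²`-sized quantity
  set A : ℝ := ε^2 * ((κ*w - α₀*p*w*s + p*κ*(1-c) - α₀*p^2*s)/ω₀) with hA
  set B : ℝ := ε^2 * ((α₀*p*w*c - p*κ*s)/ω₀) with hB
  have key : deriv f t
          + Complex.I * (((ω₀ : ℂ) - (ε : ℂ) * (w : ℂ)) * f t
              + (ε : ℂ) * (p : ℂ) * (starRingEnd ℂ (f t)))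
          + (ε : ℂ) * (κ : ℂ)
      = ((A : ℝ) : ℂ) + ((B : ℝ) : ℂ) * Complex.I := by
    rw [hdf.deriv]
    simp only [hf]
    rw [hE]
    simp only [← hs, ← hc, map_add, map_mul, map_sub, map_div₀, map_one,
      Complex.conj_ofReal, Complex.conj_I, hA, hB]
    push_cast [hΩ]
    field_simp
    ring_nf
    simp only [Complex.I_sq]
    ring
  rw [key]
  -- bound the residual
  have habs : ‖((A : ℝ) : ℂ) + ((B : ℝ) : ℂ) * Complex.I‖ ≤ |A| + |B| := by
    refine (Complex.norm_le_abs_re_add_abs_im _).trans_eq ?_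
    simp
  refine habs.trans ?_
  have hs1 : |s| ≤ 1 := by rw [hs]; exact Real.abs_sin_le_one _
  have hc1 : |c| ≤ 1 := by rw [hc]; exact Real.abs_cos_le_one _
  have hbound : |κ*w - α₀*p*w*s + p*κ*(1-c) - α₀*p^2*s| + |α₀*p*w*c - p*κ*s| ≤ K := by
    have e1 : |α₀*p*w*s| ≤ |α₀*p*w| := by
      rw [show α₀*p*w*s = (α₀*p*w)*s by ring, abs_mul]
      nlinarith [abs_nonneg (α₀*p*w)]
    have e2 : |α₀*p*w*c| ≤ |α₀*p*w| := by
      rw [show α₀*p*w*c = (α₀*p*w)*c by ring, abs_mul]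
      nlinarith [abs_nonneg (α₀*p*w)]
    have e3 : |p*κ*(1-c)| ≤ 2*|p*κ| := by
      rw [abs_mul]
      have h2 : |1 - c| ≤ 2 := by
        rw [abs_le] at hc1 ⊢; constructor <;> linarith [hc1.1, hc1.2]
      nlinarith [abs_nonneg (p*κ)]
    have e4 : |p*κ*s| ≤ |p*κ| := by
      rw [abs_mul]; nlinarith [abs_nonneg (p*κ)]
    have e5 : |α₀*p^2*s| ≤ |α₀*p^2| := by
      rw [abs_mul]; nlinarith [abs_nonneg (α₀*p^2)]
    have t1 : |κ*w - α₀*p*w*s + p*κ*(1-c) - α₀*p^2*s|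
        ≤ |κ*w| + |α₀*p*w*s| + |p*κ*(1-c)| + |α₀*p^2*s| := by
      calc |κ*w - α₀*p*w*s + p*κ*(1-c) - α₀*p^2*s|
          ≤ |κ*w - α₀*p*w*s + p*κ*(1-c)| + |α₀*p^2*s| := abs_sub _ _
        _ ≤ |κ*w - α₀*p*w*s| + |p*κ*(1-c)| + |α₀*p^2*s| := by
            gcongr; exact abs_add_le _ _
        _ ≤ |κ*w| + |α₀*p*w*s| + |p*κ*(1-c)| + |α₀*p^2*s| := by
            gcongr; exact abs_sub _ _
    have t2 : |α₀*p*w*c - p*κ*s| ≤ |α₀*p*w*c| + |p*κ*s| := abs_sub _ _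
    rw [hKdef]; linarith
  calc |A| + |B|
      = (|κ*w - α₀*p*w*s + p*κ*(1-c) - α₀*p^2*s| + |α₀*p*w*c - p*κ*s|) / |ω₀| * ε^2 := by
        rw [hA, hB, abs_mul, abs_mul, abs_div, abs_div, abs_pow, sq_abs]; ring
    _ ≤ K / |ω₀| * ε^2 := by
        have hpos : (0:ℝ) < |ω₀| := abs_pos.mpr hω
        gcongr
end
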